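/- For |q|<1, |ζ|<1, ζ ≠ 1: Σ_{n≥0} ζ^n/(−q;q²)_n = 1 + (ζ/(1−ζ)) Σ_{n≥0} (−q)^n/(ζq²;q²)_n, i.e., F(0, −q^{-1}; ζ; q²) = 1 + ζ/(1−ζ) · F(0, ζ; −q; q²) where F(0,b;t;Q) = Σ_{n≥0} t^n/(bQ;Q)_n. -/

import Mathlib

open Complex

noncomputable def qPoch (a q : ℂ) (n : ℕ) : ℂ := ∏ j ∈ Finset.range n, (1 - a * q ^ j)

lemma qPoch_zero (a q : ℂ) : qPoch a q 0 = 1 := by simp [qPoch]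

lemma qPoch_succ (a q : ℂ) (n : ℕ) : qPoch a q (n+1) = qPoch a q n * (1 - a * q ^ n) := by
  simp [qPoch, Finset.prod_range_succ]

lemma qPoch_succ' (a q : ℂ) (n : ℕ) : qPoch a q (n+1) = (1 - a) * qPoch (a * q) q n := by
  rw [qPoch, Finset.prod_range_succ', qPoch]
  simp only [pow_zero, mul_one]
  rw [mul_comm]
  congr 1
  apply Finset.prod_congr rfl
  intro j _
  ring

lemma qPoch_ne_zero {a q : ℂ} (ha : ‖a‖ < 1) (hq : ‖q‖ ≤ 1) (n : ℕ) : qPoch a q n ≠ 0 := by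
  rw [qPoch]
  apply Finset.prod_ne_zero_iff.2
  intro j _
  intro h
  have h1 : a * q ^ j = 1 := by linear_combination -h
  have : ‖a * q ^ j‖ < 1 := by
    calc ‖a * q ^ j‖ = ‖a‖ * ‖q‖ ^ j := by simp [norm_mul, norm_pow]
    _ ≤ ‖a‖ * 1 := by
        apply mul_le_mul_of_nonneg_left _ (norm_nonneg a)
        exact pow_le_one₀ (norm_nonneg q) hq
    _ < 1 := by simpa using ha
  rw [h1] at this; simp at this

noncomputable def Bq (Q : ℂ) (n k : ℕ) : ℂ := qPoch (Q ^ n) Q k / qPoch Q Q k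

lemma qPochQ_ne_zero {Q : ℂ} (hQ : ‖Q‖ < 1) (k : ℕ) : qPoch Q Q k ≠ 0 :=
  qPoch_ne_zero hQ hQ.le k

lemma Bq_zero {Q : ℂ} (hQ : ‖Q‖ < 1) (k : ℕ) :
    Bq Q 0 k = if k = 0 then 1 else 0 := by
  rcases Nat.eq_zero_or_pos k with hk | hk
  · simp [hk, Bq, qPoch_zero]
  · rw [Bq, if_neg hk.ne']
    rw [div_eq_zero_iff]
    left
    rw [qPoch]
    apply Finset.prod_eq_zero (Finset.mem_range.2 hk)
    simp

lemma Bq_n_zero (Q : ℂ) (n : ℕ) : Bq Q n 0 = 1 := by simp [Bq, qPoch_zero]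

lemma Bq_pascal {Q : ℂ} (hQ : ‖Q‖ < 1) (n k : ℕ) :
    Bq Q (n+1) (k+1) = Bq Q n (k+1) + Q ^ n * Bq Q (n+1) k := by
  have hD : ∀ m, qPoch Q Q m ≠ 0 := qPochQ_ne_zero hQ
  rw [Bq, Bq, Bq]
  have h1 : qPoch (Q ^ (n+1)) Q (k+1) = qPoch (Q ^ (n+1)) Q k * (1 - Q ^ (n+1) * Q ^ k) :=
    qPoch_succ _ _ _
  have h2 : qPoch (Q ^ n) Q (k+1) = (1 - Q ^ n) * qPoch (Q ^ (n+1)) Q k := by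
    rw [qPoch_succ' (Q ^ n) Q k, ← pow_succ]
  have h3 : qPoch Q Q (k+1) = qPoch Q Q k * (1 - Q * Q ^ k) := qPoch_succ _ _ _
  have h4 : (1 - Q * Q ^ k) ≠ 0 := by
    intro h
    exact hD (k+1) (by rw [h3, h, mul_zero])
  rw [h1, h2, h3]
  have h5 := hD k
  generalize qPoch Q Q k = D at *
  generalize qPoch (Q ^ (n+1)) Q k = P at *
  rw [mul_div_assoc', div_add_div _ _ (mul_ne_zero h5 h4) h5, div_eq_div_iff (mul_ne_zero h5 h4) (mul_ne_zero (mul_ne_zero h5 h4) h5)]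
  ring

noncomputable def Mb (r : ℝ) : ℝ := Real.exp (2 * r / ((1 - r) * (1 - r)))

lemma factor_le {r s : ℝ} (h0 : 0 ≤ s) (hsr : s ≤ r) (hr : r < 1) :
    (1 + s) / (1 - s) ≤ Real.exp (2 * s / (1 - r)) := by
  have hs1 : s < 1 := lt_of_le_of_lt hsr hr
  have h1s : (0:ℝ) < 1 - s := by linarith
  have h1r : (0:ℝ) < 1 - r := by linarith
  have key : (1 + s) / (1 - s) = 1 + 2 * s / (1 - s) := by field_simp; ring
  rw [key]
  have h2 : 2 * s / (1 - s) ≤ 2 * s / (1 - r) := by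
    apply div_le_div_of_nonneg_left (by linarith) h1r (by linarith)
  calc (1:ℝ) + 2 * s / (1 - s) ≤ 1 + 2 * s / (1 - r) := by linarith
    _ = 2 * s / (1 - r) + 1 := by ring
    _ ≤ Real.exp (2 * s / (1 - r)) := Real.add_one_le_exp _

lemma Bq_norm_le {Q : ℂ} (hQ : ‖Q‖ < 1) (n k : ℕ) : ‖Bq Q n k‖ ≤ Mb ‖Q‖ := by
  set r := ‖Q‖ with hr
  have hr0 : 0 ≤ r := norm_nonneg Q
  have hMb1 : (1:ℝ) ≤ Mb r := by
    rw [Mb, ← Real.exp_zero]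
    apply Real.exp_le_exp.2
    apply div_nonneg (by linarith) (by nlinarith)
  rcases Nat.eq_zero_or_pos n with hn | hn
  · rw [hn, Bq_zero hQ]
    split <;> simp <;> linarith
  · rw [Bq, norm_div, qPoch, qPoch, norm_prod, norm_prod, ← Finset.prod_div_distrib]
    have step : ∀ j ∈ Finset.range k,
        ‖1 - Q ^ n * Q ^ j‖ / ‖1 - Q * Q ^ j‖ ≤ Real.exp (2 * r ^ (j+1) / (1 - r)) := by
      intro j _
      have hs0 : (0:ℝ) ≤ r ^ (j+1) := pow_nonneg hr0 _
      have hsr : r ^ (j+1) ≤ r := by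
        calc r ^ (j+1) ≤ r ^ 1 := pow_le_pow_of_le_one hr0 hQ.le (by omega)
        _ = r := pow_one r
      have hnum : ‖1 - Q ^ n * Q ^ j‖ ≤ 1 + r ^ (j+1) := by
        calc ‖1 - Q ^ n * Q ^ j‖ ≤ ‖(1:ℂ)‖ + ‖Q ^ n * Q ^ j‖ := norm_sub_le _ _
        _ = 1 + r ^ (n + j) := by rw [norm_mul, norm_pow, norm_pow, norm_one, ← pow_add]
        _ ≤ 1 + r ^ (j+1) := by
            have : r ^ (n+j) ≤ r ^ (j+1) := pow_le_pow_of_le_one hr0 hQ.le (by omega)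
            linarith
      have hden : 1 - r ^ (j+1) ≤ ‖1 - Q * Q ^ j‖ := by
        calc 1 - r ^ (j+1) = ‖(1:ℂ)‖ - ‖Q * Q ^ j‖ := by
              rw [norm_mul, norm_pow, norm_one, ← pow_succ']
        _ ≤ ‖1 - Q * Q ^ j‖ := norm_sub_norm_le _ _
      have hpos : (0:ℝ) < 1 - r ^ (j+1) := by
        have : r ^ (j+1) ≤ r := hsr
        linarith
      calc ‖1 - Q ^ n * Q ^ j‖ / ‖1 - Q * Q ^ j‖ ≤ (1 + r ^ (j+1)) / (1 - r ^ (j+1)) :=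
            div_le_div₀ (by linarith) hnum hpos hden
      _ ≤ Real.exp (2 * r ^ (j+1) / (1 - r)) := factor_le hs0 hsr hQ
    calc (∏ j ∈ Finset.range k, ‖1 - Q ^ n * Q ^ j‖ / ‖1 - Q * Q ^ j‖)
        ≤ ∏ j ∈ Finset.range k, Real.exp (2 * r ^ (j+1) / (1 - r)) := by
          apply Finset.prod_le_prod _ step
          intro j _
          positivity
      _ = Real.exp (∑ j ∈ Finset.range k, 2 * r ^ (j+1) / (1 - r)) := by
          rw [Real.exp_sum]
      _ ≤ Mb r := by
          apply Real.exp_le_exp.2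
          have hsum : ∑ j ∈ Finset.range k, r ^ (j+1) ≤ r / (1 - r) := by
            have h1 : ∑ j ∈ Finset.range k, r ^ (j+1) = r * ∑ j ∈ Finset.range k, r ^ j := by
              rw [Finset.mul_sum]
              apply Finset.sum_congr rfl
              intro j _
              rw [← pow_succ']
            rw [h1, div_eq_mul_inv]
            apply mul_le_mul_of_nonneg_left _ hr0
            have := Summable.sum_le_tsum (Finset.range k) (fun i _ => pow_nonneg hr0 i)
              (summable_geometric_of_lt_one hr0 hQ)
            rwa [tsum_geometric_of_lt_one hr0 hQ] at this
          have h1r : (0:ℝ) < 1 - r := by linarith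
          calc ∑ j ∈ Finset.range k, 2 * r ^ (j+1) / (1 - r)
              = (∑ j ∈ Finset.range k, r ^ (j+1)) * (2 / (1-r)) := by
                rw [Finset.sum_mul]
                apply Finset.sum_congr rfl
                intro j _
                ring
            _ ≤ (r / (1-r)) * (2 / (1-r)) := by
                apply mul_le_mul_of_nonneg_right hsum (by positivity)
            _ = 2 * r / ((1 - r) * (1 - r)) := by field_simp

lemma summable_Bq_k {Q y : ℂ} (hQ : ‖Q‖ < 1) (hy : ‖y‖ < 1) (n : ℕ) :
    Summable fun k => Bq Q n k * y ^ k := by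
  apply Summable.of_norm_bounded (g := fun k => Mb ‖Q‖ * ‖y‖ ^ k)
    ((summable_geometric_of_lt_one (norm_nonneg y) hy).mul_left _)
  intro k
  rw [norm_mul, norm_pow]
  exact mul_le_mul_of_nonneg_right (Bq_norm_le hQ n k) (pow_nonneg (norm_nonneg y) k)

lemma summable_Bq_n {Q u : ℂ} (hQ : ‖Q‖ < 1) (hu : ‖u‖ < 1) (k : ℕ) :
    Summable fun n => Bq Q n k * u ^ n := by
  apply Summable.of_norm_bounded (g := fun n => Mb ‖Q‖ * ‖u‖ ^ n)
    ((summable_geometric_of_lt_one (norm_nonneg u) hu).mul_left _)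
  intro n
  rw [norm_mul, norm_pow]
  exact mul_le_mul_of_nonneg_right (Bq_norm_le hQ n k) (pow_nonneg (norm_nonneg u) n)

lemma sum_Bq_k {Q y : ℂ} (hQ : ‖Q‖ < 1) (hy : ‖y‖ < 1) (n : ℕ) :
    ∑' k, Bq Q n k * y ^ k = (qPoch y Q n)⁻¹ := by
  induction n with
  | zero =>
      have h : ∀ k, Bq Q 0 k * y ^ k = if k = 0 then 1 else 0 := by
        intro k
        rw [Bq_zero hQ]
        split <;> simp_all
      rw [tsum_congr h, tsum_ite_eq, qPoch_zero, inv_one]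
  | succ n ih =>
      have hne : qPoch y Q n ≠ 0 := qPoch_ne_zero hy hQ.le n
      have hne1 : qPoch y Q (n+1) ≠ 0 := qPoch_ne_zero hy hQ.le (n+1)
      have hfac : (1 - y * Q ^ n) ≠ 0 := by
        intro h
        exact hne1 (by rw [qPoch_succ, h, mul_zero])
      set f1 : ℕ → ℂ := fun k => Bq Q (n+1) k * y ^ k with hf1
      set f0 : ℕ → ℂ := fun k => Bq Q n k * y ^ k with hf0
      have h1 : HasSum f1 (∑' k, f1 k) := (summable_Bq_k hQ hy (n+1)).hasSum
      have h0 : HasSum f0 (∑' k, f0 k) := (summable_Bq_k hQ hy n).hasSum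
      have h1s : HasSum (fun k => f1 (k+1)) ((∑' k, f1 k) - 1) := by
        apply (hasSum_nat_add_iff 1).2
        simpa [hf1, Bq_n_zero] using h1
      have h0s : HasSum (fun k => f0 (k+1)) ((∑' k, f0 k) - 1) := by
        apply (hasSum_nat_add_iff 1).2
        simpa [hf0, Bq_n_zero] using h0
      have h2 : HasSum (fun k => (y * Q ^ n) * f1 k) ((y * Q ^ n) * ∑' k, f1 k) :=
        h1.mul_left _
      have h3 : HasSum (fun k => f1 (k+1) - (y * Q ^ n) * f1 k)
          ((∑' k, f1 k) - 1 - (y * Q ^ n) * ∑' k, f1 k) := h1s.sub h2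
      have h4 : (fun k => f1 (k+1) - (y * Q ^ n) * f1 k) = fun k => f0 (k+1) := by
        funext k
        simp only [hf1, hf0]
        rw [Bq_pascal hQ]
        ring
      rw [h4] at h3
      have h5 : (∑' k, f1 k) - 1 - (y * Q ^ n) * ∑' k, f1 k = (∑' k, f0 k) - 1 :=
        h3.unique h0s
      rw [ih] at h5
      rw [qPoch_succ, mul_inv]
      have : (∑' k, f1 k) * (1 - y * Q ^ n) = (qPoch y Q n)⁻¹ := by
        linear_combination h5
      field_simp at this ⊢
      linear_combination this

lemma sum_Bq_n {Q : ℂ} (hQ : ‖Q‖ < 1) (hQ0 : Q ≠ 0) :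
    ∀ k, ∀ u : ℂ, ‖u‖ < 1 →
    ∑' n, Bq Q n k * u ^ n = (if k = 0 then 1 else 0) + u / qPoch u Q (k+1) := by
  intro k
  induction k with
  | zero =>
      intro u hu
      have h1u : (1 - u) ≠ 0 := by
        intro h
        have : u = 1 := by linear_combination -h
        rw [this] at hu; simp at hu
      have : ∀ n, Bq Q n 0 * u ^ n = u ^ n := by
        intro n; rw [Bq_n_zero, one_mul]
      rw [tsum_congr this, tsum_geometric_of_norm_lt_one hu]
      have hq1 : qPoch u Q 1 = 1 - u := by
        rw [qPoch_succ, qPoch_zero, one_mul, pow_zero, mul_one]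
      rw [hq1, if_pos rfl]
      field_simp
      ring
  | succ k ih =>
      intro u hu
      have huQ : ‖u * Q‖ < 1 := by
        rw [norm_mul]
        calc ‖u‖ * ‖Q‖ ≤ 1 * ‖Q‖ := mul_le_mul_of_nonneg_right hu.le (norm_nonneg Q)
        _ = ‖Q‖ := one_mul _
        _ < 1 := hQ
      have h1u : (1 - u) ≠ 0 := by
        intro h
        have : u = 1 := by linear_combination -h
        rw [this] at hu; simp at hu
      have hpoch : qPoch (u * Q) Q (k+1) ≠ 0 := qPoch_ne_zero huQ hQ.le (k+1)
      set g : ℕ → ℂ := fun n => Bq Q n (k+1) * u ^ n with hgdef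
      set h : ℕ → ℂ := fun n => Bq Q n k * (u * Q) ^ n with hhdef
      have hgsum : Summable g := summable_Bq_n hQ hu (k+1)
      have hhsum : Summable h := summable_Bq_n hQ huQ k
      have hg : HasSum g (∑' n, g n) := hgsum.hasSum
      have hh : HasSum h (∑' n, h n) := hhsum.hasSum
      have hgs : HasSum (fun n => g (n+1)) (∑' n, g n) := by
        apply (hasSum_nat_add_iff 1).2
        have hg0 : g 0 = 0 := by
          simp only [hgdef]
          rw [Bq_zero hQ, if_neg (Nat.succ_ne_zero k)]
          simp
        simpa [hg0] using hg
      have hhs : HasSum (fun n => h (n+1)) ((∑' n, h n) - (if k = 0 then 1 else 0)) := by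
        apply (hasSum_nat_add_iff 1).2
        have hh0 : h 0 = (if k = 0 then 1 else 0) := by
          simp only [hhdef]
          rw [Bq_zero hQ]
          split <;> simp
        simpa [hh0] using hh
      have hcomb : HasSum (fun n => u * g n + Q⁻¹ * h (n+1))
          (u * (∑' n, g n) + Q⁻¹ * ((∑' n, h n) - (if k = 0 then 1 else 0))) :=
        (hg.mul_left u).add (hhs.mul_left Q⁻¹)
      have hfun : (fun n => u * g n + Q⁻¹ * h (n+1)) = fun n => g (n+1) := by
        funext n
        simp only [hgdef, hhdef]
        rw [Bq_pascal hQ]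
        field_simp
        all_goals ring
      rw [hfun] at hcomb
      have hkey : u * (∑' n, g n) + Q⁻¹ * ((∑' n, h n) - (if k = 0 then 1 else 0))
          = ∑' n, g n := hcomb.unique hgs
      rw [ih (u * Q) huQ] at hkey
      have hend : qPoch u Q (k+2) = (1 - u) * qPoch (u * Q) Q (k+1) := qPoch_succ' _ _ _
      rw [if_neg (Nat.succ_ne_zero k), zero_add, hend]
      have hsimp : Q⁻¹ * ((if k = 0 then 1 else 0) + u * Q / qPoch (u * Q) Q (k + 1)
          - (if k = 0 then 1 else 0)) = u / qPoch (u * Q) Q (k+1) := by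
        rw [add_sub_cancel_left]
        field_simp
        all_goals ring
      rw [hsimp] at hkey
      -- hkey : u * S + u / P = S  where P := qPoch (u*Q) Q (k+1)
      rw [eq_div_iff (mul_ne_zero h1u hpoch)]
      have h6 : (∑' n, g n) * (1 - u) = u / qPoch (u * Q) Q (k + 1) := by
        linear_combination -hkey
      calc (∑' n, g n) * ((1 - u) * qPoch (u * Q) Q (k + 1))
          = ((∑' n, g n) * (1 - u)) * qPoch (u * Q) Q (k + 1) := by ring
        _ = (u / qPoch (u * Q) Q (k + 1)) * qPoch (u * Q) Q (k + 1) := by rw [h6]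
        _ = u := div_mul_cancel₀ _ hpoch

set_option maxHeartbeats 1000000 in
/-- `F(0, −q^{-1}; ζ; q²) = 1 + ζ/(1−ζ) · F(0, ζ; −q; q²)`, i.e.
`Σ_{n≥0} ζ^n/(−q;q²)_n = 1 + (ζ/(1−ζ)) Σ_{n≥0} (−q)^n/(ζq²;q²)_n`. -/
theorem fine_combined (q ζ : ℂ) (hq0 : 0 < ‖q‖) (hq1 : ‖q‖ < 1)
    (hζ : ‖ζ‖ < 1) (hζ1 : ζ ≠ 1)
    (hζq : ∀ m : ℕ, 1 ≤ m → ζ * q ^ (2 * m) ≠ 1) :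
    ∑' n : ℕ, ζ ^ n / qPoch (-q) (q ^ 2) n
      = 1 + ζ / (1 - ζ) * ∑' n : ℕ, (-q) ^ n / qPoch (ζ * q ^ 2) (q ^ 2) n := by
  set Q : ℂ := q ^ 2 with hQdef
  set y : ℂ := -q with hydef
  have hQ : ‖Q‖ < 1 := by
    rw [hQdef, norm_pow]
    nlinarith [norm_nonneg q]
  have hy : ‖y‖ < 1 := by rwa [hydef, norm_neg]
  -- the double family
  have hq0' : q ≠ 0 := by
    intro h
    rw [h] at hq0
    simp at hq0
  have hQ0 : Q ≠ 0 := pow_ne_zero _ hq0'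
  have hF : Summable (Function.uncurry fun n k : ℕ => ζ ^ n * (Bq Q n k * y ^ k)) := by
    apply Summable.of_norm_bounded
      (g := fun p : ℕ × ℕ => Mb ‖Q‖ * (‖ζ‖ ^ p.1 * ‖y‖ ^ p.2))
      (((summable_geometric_of_lt_one (norm_nonneg ζ) hζ).mul_of_nonneg
        (summable_geometric_of_lt_one (norm_nonneg y) hy)
        (fun _ => pow_nonneg (norm_nonneg ζ) _)
        (fun _ => pow_nonneg (norm_nonneg y) _)).mul_left _)
    intro p
    rw [Function.uncurry_def]
    rw [norm_mul, norm_mul, norm_pow, norm_pow]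
    calc ‖ζ‖ ^ p.1 * (‖Bq Q p.1 p.2‖ * ‖y‖ ^ p.2)
        ≤ ‖ζ‖ ^ p.1 * (Mb ‖Q‖ * ‖y‖ ^ p.2) := by
          apply mul_le_mul_of_nonneg_left _ (pow_nonneg (norm_nonneg ζ) _)
          exact mul_le_mul_of_nonneg_right (Bq_norm_le hQ _ _)
            (pow_nonneg (norm_nonneg y) _)
      _ = Mb ‖Q‖ * (‖ζ‖ ^ p.1 * ‖y‖ ^ p.2) := by ring
  -- left side as iterated sum, then swap
  have step1 : ∑' n : ℕ, ζ ^ n / qPoch y Q n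
      = ∑' n : ℕ, ∑' k : ℕ, ζ ^ n * (Bq Q n k * y ^ k) := by
    apply tsum_congr
    intro n
    rw [tsum_mul_left, sum_Bq_k hQ hy n, div_eq_mul_inv]
  have hswap : ∑' n : ℕ, ∑' k : ℕ, ζ ^ n * (Bq Q n k * y ^ k)
      = ∑' k : ℕ, ∑' n : ℕ, ζ ^ n * (Bq Q n k * y ^ k) := by
    refine (Summable.tsum_comm' hF ?_ ?_).symm
    · intro n
      exact ((summable_Bq_k hQ hy n).mul_left _)
    · intro k
      have : Summable fun n => (Bq Q n k * ζ ^ n) * y ^ k :=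
        (summable_Bq_n hQ hζ k).mul_right _
      exact this.congr fun n => by ring
  -- evaluate inner sums over n
  have step2 : ∀ k : ℕ, ∑' n : ℕ, ζ ^ n * (Bq Q n k * y ^ k)
      = y ^ k * ((if k = 0 then 1 else 0) + ζ / qPoch ζ Q (k+1)) := by
    intro k
    have : ∑' n : ℕ, ζ ^ n * (Bq Q n k * y ^ k)
        = y ^ k * ∑' n : ℕ, Bq Q n k * ζ ^ n := by
      rw [tsum_mul_left.symm]
      exact tsum_congr fun n => by ring
    rw [this, sum_Bq_n hQ hQ0 k ζ hζ]
  -- summability of the fiber sums over n, as a function of k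
  have hfiber : ∀ k : ℕ, Summable fun n => ζ ^ n * (Bq Q n k * y ^ k) := by
    intro k
    have : Summable fun n => (Bq Q n k * ζ ^ n) * y ^ k :=
      (summable_Bq_n hQ hζ k).mul_right _
    exact this.congr fun n => by ring
  have hSfun : Summable fun k : ℕ => ∑' n : ℕ, ζ ^ n * (Bq Q n k * y ^ k) := by
    have hF' : Summable fun p : ℕ × ℕ => ζ ^ p.2 * (Bq Q p.2 p.1 * y ^ p.1) := by
      have := hF.prod_symm
      exact this.congr fun p => rfl
    refine (hF'.hasSum.prod_fiberwise (g := fun k => ∑' n : ℕ, ζ ^ n * (Bq Q n k * y ^ k))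
      ?_).summable
    intro k
    exact (hfiber k).hasSum
  have hA : HasSum (fun k : ℕ => y ^ k * (if k = 0 then (1:ℂ) else 0)) 1 := by
    have heq : (fun k : ℕ => y ^ k * (if k = 0 then (1:ℂ) else 0))
        = fun k : ℕ => if k = 0 then (1:ℂ) else 0 := by
      funext k
      split <;> simp_all
    rw [heq]
    exact hasSum_ite_eq 0 1
  set Bf : ℕ → ℂ := fun k => y ^ k * (ζ / qPoch ζ Q (k+1)) with hBfdef
  have hAB : Summable fun k : ℕ => y ^ k * (if k = 0 then (1:ℂ) else 0) + Bf k := by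
    apply hSfun.congr
    intro k
    rw [step2 k]
    simp only [hBfdef]
    ring
  have hB : Summable Bf := by
    have := hAB.sub hA.summable
    apply this.congr
    intro k
    ring
  have hBf_eq : ∀ k : ℕ, Bf k = ζ / (1 - ζ) * (y ^ k / qPoch (ζ * Q) Q k) := by
    intro k
    simp only [hBfdef]
    rw [qPoch_succ' ζ Q k]
    simp only [div_eq_mul_inv, mul_inv]
    ring
  calc ∑' n : ℕ, ζ ^ n / qPoch y Q n
      = ∑' k : ℕ, ∑' n : ℕ, ζ ^ n * (Bq Q n k * y ^ k) := by rw [step1, hswap]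
    _ = ∑' k : ℕ, (y ^ k * (if k = 0 then (1:ℂ) else 0) + Bf k) := by
        apply tsum_congr
        intro k
        rw [step2 k]
        simp only [hBfdef]
        ring
    _ = (∑' k : ℕ, y ^ k * (if k = 0 then (1:ℂ) else 0)) + ∑' k : ℕ, Bf k :=
        Summable.tsum_add hA.summable hB
    _ = 1 + ζ / (1 - ζ) * ∑' k : ℕ, y ^ k / qPoch (ζ * Q) Q k := by
        rw [hA.tsum_eq, tsum_congr hBf_eq, tsum_mul_left]
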